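/- Let X : ℕ → {0,1} be i.i.d. Bernoulli(λ) and Y the virtual queue Y(n+1) = max(Y(n) + X(n) − ε, 0), Y(0) = y₀ ≥ 0, 0 ≤ ε ≤ 1. Then E[(1/2)Y(T)² − (1/2)Y(0)²] ≤ B₂·T + y₀·E[∑_{n=0}^{T−1}(X(n) − ε)], where B₂ = (λ + ε²)/2 + (T − 1)·((1 − ε)λ + ε²)/2. -/

import Mathlib

open MeasureTheory ProbabilityTheory

theorem lemma2_expected_drift
    {Ω : Type*} [MeasurableSpace Ω] (μ : Measure Ω) [IsProbabilityMeasure μ]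
    (X : ℕ → Ω → ℝ) (Y : ℕ → Ω → ℝ) (y₀ ε lam : ℝ) (T : ℕ)
    (hXmeas : ∀ n, Measurable (X n))
    (hX01 : ∀ n ω, X n ω = 0 ∨ X n ω = 1)
    (hindep : iIndepFun X μ)
    (hident : ∀ n, IdentDistrib (X n) (X 0) μ μ)
    (hlam0 : 0 ≤ lam) (hlam1 : lam ≤ 1)
    (hmean : ∀ n, ∫ ω, X n ω ∂μ = lam)
    (hy₀ : 0 ≤ y₀) (hε0 : 0 ≤ ε) (hε1 : ε ≤ 1)
    (hY0 : ∀ ω, Y 0 ω = y₀)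
    (hrec : ∀ n ω, Y (n + 1) ω = max (Y n ω + X n ω - ε) 0) :
    ∫ ω, ((1 / 2) * (Y T ω) ^ 2 - (1 / 2) * (Y 0 ω) ^ 2) ∂μ ≤
      ((lam + ε ^ 2) / 2 + ((T : ℝ) - 1) * ((1 - ε) * lam + ε ^ 2) / 2) * T +
        y₀ * ∫ ω, (∑ n ∈ Finset.range T, (X n ω - ε)) ∂μ := by
  have hX0 : ∀ n ω, 0 ≤ X n ω := fun n ω => by rcases hX01 n ω with h|h <;> simp [h]
  have hX1 : ∀ n ω, X n ω ≤ 1 := fun n ω => by rcases hX01 n ω with h|h <;> simp [h]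
  have hYmeas : ∀ n, Measurable (Y n) := by
    intro n
    induction n with
    | zero =>
      have : Y 0 = fun _ => y₀ := funext hY0
      rw [this]; exact measurable_const
    | succ n ih =>
      have : Y (n+1) = fun ω => max (Y n ω + X n ω - ε) 0 := funext (hrec n)
      rw [this]
      exact ((ih.add (hXmeas n)).sub measurable_const).max measurable_const
  have hYnn : ∀ n ω, 0 ≤ Y n ω := by
    intro n ω
    cases n with
    | zero => rw [hY0 ω]; exact hy₀
    | succ n => rw [hrec n ω]; exact le_max_right _ _
  have hYub : ∀ n ω, Y n ω ≤ y₀ + n * (1 - ε) := by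
    intro n
    induction n with
    | zero => intro ω; simp [hY0 ω]
    | succ n ih =>
      intro ω
      rw [hrec n ω]
      have h1 := ih ω
      have h2 := hX1 n ω
      have hn : (0:ℝ) ≤ n := Nat.cast_nonneg n
      apply max_le <;> push_cast <;> nlinarith
  have hYlb : ∀ n ω, y₀ - n * ε ≤ Y n ω := by
    intro n
    induction n with
    | zero => intro ω; simp [hY0 ω]
    | succ n ih =>
      intro ω
      rw [hrec n ω]
      have h1 := ih ω
      have h2 := hX0 n ω
      refine le_trans ?_ (le_max_left _ _)
      push_cast; linarith
  have hstep : ∀ n ω, (1/2) * (Y (n+1) ω)^2 - (1/2) * (Y n ω)^2 ≤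
      (1/2) * (X n ω + ε^2) + y₀ * (X n ω - ε) + n * ((1-ε) * X n ω + ε^2) := by
    intro n ω
    have hsq : (Y (n+1) ω)^2 ≤ (Y n ω + X n ω - ε)^2 := by
      rw [hrec n ω]
      rcases le_or_gt 0 (Y n ω + X n ω - ε) with h|h
      · rw [max_eq_left h]
      · rw [max_eq_right h.le]; simpa using sq_nonneg (Y n ω + X n ω - ε)
    have hub := hYub n ω
    have hlb := hYlb n ω
    have hn : (0:ℝ) ≤ n := Nat.cast_nonneg n
    rcases hX01 n ω with h|h
    · rw [h] at hsq ⊢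
      nlinarith [mul_nonneg hε0 (show (0:ℝ) ≤ Y n ω - (y₀ - n*ε) by linarith)]
    · rw [h] at hsq ⊢
      nlinarith [mul_nonneg (show (0:ℝ) ≤ 1 - ε by linarith)
        (show (0:ℝ) ≤ y₀ + n*(1-ε) - Y n ω by linarith),
        mul_nonneg hn (mul_nonneg hε0 (show (0:ℝ) ≤ 1 - ε by linarith))]
  -- telescoping
  have htel : ∀ (m : ℕ) (ω : Ω), (1/2) * (Y m ω)^2 - (1/2) * (Y 0 ω)^2 ≤
      ∑ n ∈ Finset.range m,
        ((1/2) * (X n ω + ε^2) + y₀ * (X n ω - ε) + (n:ℝ) * ((1-ε) * X n ω + ε^2)) := by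
    intro m ω
    induction m with
    | zero => simp
    | succ m ih =>
      rw [Finset.sum_range_succ]
      have := hstep m ω
      linarith
  -- integrability
  have hXint : ∀ n, Integrable (X n) μ := by
    intro n
    refine ⟨(hXmeas n).aestronglyMeasurable, ?_⟩
    apply HasFiniteIntegral.of_bounded (C := 1)
    filter_upwards with ω
    rw [Real.norm_eq_abs, abs_le]
    exact ⟨by linarith [hX0 n ω], hX1 n ω⟩
  have hgint : ∀ n : ℕ, Integrable (fun ω =>
      (1/2) * (X n ω + ε^2) + y₀ * (X n ω - ε) + (n:ℝ) * ((1-ε) * X n ω + ε^2)) μ := by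
    intro n
    exact ((((hXint n).add (integrable_const _)).const_mul _).add
      (((hXint n).sub (integrable_const _)).const_mul _)).add
      ((((hXint n).const_mul _).add (integrable_const _)).const_mul _)
  have hLint : Integrable (fun ω => (1/2) * (Y T ω)^2 - (1/2) * (Y 0 ω)^2) μ := by
    refine ⟨((((hYmeas T).pow_const 2).const_mul _).sub
      (((hYmeas 0).pow_const 2).const_mul _)).aestronglyMeasurable, ?_⟩
    apply HasFiniteIntegral.of_bounded (C := (1/2) * (y₀ + T)^2 + (1/2) * y₀^2)
    filter_upwards with ω
    have h1 := hYnn T ω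
    have h2 := hYub T ω
    have h3 := hYnn 0 ω
    have h4 := hY0 ω
    have hn : (0:ℝ) ≤ T := Nat.cast_nonneg T
    have hb : Y T ω ≤ y₀ + T := by nlinarith [mul_nonneg hn hε0]
    rw [Real.norm_eq_abs, abs_le]
    constructor <;> nlinarith [sq_nonneg (y₀ + (T:ℝ)), sq_nonneg (Y T ω)]
  have hXsubint : ∀ n : ℕ, Integrable (fun ω => X n ω - ε) μ :=
    fun n => (hXint n).sub (integrable_const _)
  -- value of each integral
  have hgval : ∀ n : ℕ, ∫ ω, ((1/2) * (X n ω + ε^2) + y₀ * (X n ω - ε)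
      + (n:ℝ) * ((1-ε) * X n ω + ε^2)) ∂μ
      = (1/2) * (lam + ε^2) + y₀ * (lam - ε) + (n:ℝ) * ((1-ε) * lam + ε^2) := by
    intro n
    have heq : (fun ω => (1/2) * (X n ω + ε^2) + y₀ * (X n ω - ε)
        + (n:ℝ) * ((1-ε) * X n ω + ε^2))
        = fun ω => (1/2 + y₀ + (n:ℝ) * (1-ε)) * X n ω + (ε^2/2 - y₀*ε + (n:ℝ)*ε^2) :=
      funext fun ω => by ring
    rw [heq, integral_add ((hXint n).const_mul _) (integrable_const _),
      integral_const_mul, hmean n, integral_const]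
    simp
    ring
  have hgauss : ∀ m : ℕ, (∑ n ∈ Finset.range m, (n:ℝ)) = m * (m - 1) / 2 := by
    intro m
    induction m with
    | zero => simp
    | succ m ih => rw [Finset.sum_range_succ, ih]; push_cast; ring
  have hXsum : ∫ ω, (∑ n ∈ Finset.range T, (X n ω - ε)) ∂μ = T * (lam - ε) := by
    rw [integral_finset_sum _ (fun n _ => hXsubint n)]
    have : ∀ n ∈ Finset.range T, ∫ ω, (X n ω - ε) ∂μ = lam - ε := by
      intro n _
      rw [integral_sub (hXint n) (integrable_const _), hmean n, integral_const]
      simp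
    rw [Finset.sum_congr rfl this, Finset.sum_const, Finset.card_range, nsmul_eq_mul]
  calc ∫ ω, ((1 / 2) * (Y T ω) ^ 2 - (1 / 2) * (Y 0 ω) ^ 2) ∂μ
      ≤ ∫ ω, (∑ n ∈ Finset.range T,
          ((1/2) * (X n ω + ε^2) + y₀ * (X n ω - ε) + (n:ℝ) * ((1-ε) * X n ω + ε^2))) ∂μ := by
        apply integral_mono hLint (integrable_finset_sum _ (fun n _ => hgint n))
        intro ω
        exact htel T ω
    _ = ∑ n ∈ Finset.range T,
          ((1/2) * (lam + ε^2) + y₀ * (lam - ε) + (n:ℝ) * ((1-ε) * lam + ε^2)) := by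
        rw [integral_finset_sum _ (fun n _ => hgint n)]
        exact Finset.sum_congr rfl (fun n _ => hgval n)
    _ = T * ((1/2) * (lam + ε^2) + y₀ * (lam - ε))
        + (T * (T - 1) / 2) * ((1-ε) * lam + ε^2) := by
        rw [Finset.sum_add_distrib, Finset.sum_const, Finset.card_range, nsmul_eq_mul,
          ← Finset.sum_mul, hgauss T]
    _ = ((lam + ε ^ 2) / 2 + ((T : ℝ) - 1) * ((1 - ε) * lam + ε ^ 2) / 2) * T
        + y₀ * (T * (lam - ε)) := by ring
    _ = _ := by rw [hXsum]
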